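/- Let p be a C², 2π-periodic support function with p+p''>0 and p(φ)+p(φ+π) constant. Equality in L² − 4πF = (4/9)π|F_e| holds if and only if all Fourier coefficients aₙ, bₙ of p vanish for n ≥ 4 (hence, since constant width kills n = 2, p(φ) = a₀ + a₁cos φ + b₁ sin φ + a₃ cos 3φ + b₃ sin 3φ). -/

import Mathlib

open Real intervalIntegral

section ProofAux

open MeasureTheory Complex AddCircle Function

instance : Fact ((0:ℝ) < 2 * π) := ⟨by positivity⟩

noncomputable def myfc (g : ℝ → ℝ) (n : ℤ) : ℂ :=
  (1 / (2*π) : ℂ) • ∫ x in (0:ℝ)..(2*π), (fourier (T := 2*π) (-n) (x : AddCircle (2*π))) * (g x : ℂ)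

lemma myfc_parseval (g : ℝ → ℝ) (hg : Continuous g) (hper : Function.Periodic g (2*π)) :
    HasSum (fun n : ℤ => ‖myfc g n‖^2) ((1/(2*π)) * ∫ x in (0:ℝ)..(2*π), (g x)^2) := by
  have hcper : Function.Periodic (fun x => (g x : ℂ)) (2*π) := fun x => by simp [hper x]
  set G : C(AddCircle (2*π), ℂ) :=
    ⟨hcper.lift, Continuous.quotient_liftOn' (by continuity) _⟩ with hG
  have step1 : ∀ n, myfc g n = fourierCoeff (⇑G) n := by
    intro n
    rw [fourierCoeff_eq_intervalIntegral ⇑G n 0, zero_add]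
    simp only [myfc, hG, ContinuousMap.coe_mk, Periodic.lift_coe, smul_eq_mul, real_smul,
      Complex.ofReal_div, Complex.ofReal_mul, Complex.ofReal_one, Complex.ofReal_ofNat]
    rfl
  set fLp := ContinuousMap.toLp (E := ℂ) 2 haarAddCircle ℂ G with hfLp
  have hcoeff : ∀ n, fourierCoeff (⇑fLp) n = myfc g n := by
    intro n; rw [step1, ← fourierCoeff_toLp]
  have summ : Summable (fun i : ℤ => ‖myfc g i‖^2) := by
    have h1 := (lp.memℓp (fourierBasis.repr fLp)).summable
      (by norm_num : 0 < (2 : ENNReal).toReal)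
    simp only [fourierBasis_repr, hcoeff] at h1
    have : ∀ i : ℤ, ‖myfc g i‖ ^ (2:ENNReal).toReal = ‖myfc g i‖^2 := by
      intro i
      rw [ENNReal.toReal_ofNat, show ((2:ℝ)) = ((2:ℕ):ℝ) by norm_num, Real.rpow_natCast]
    simpa only [this] using h1
  have tsum_eq : ∑' i : ℤ, ‖myfc g i‖^2 = (1/(2*π)) * ∫ x in (0:ℝ)..(2*π), (g x)^2 := by
    have h2 := tsum_sq_fourierCoeff fLp
    simp only [hcoeff] at h2
    rw [h2]
    have h3 : ∫ t : AddCircle (2*π), ‖fLp t‖^2 ∂haarAddCircle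
        = ∫ t : AddCircle (2*π), ‖G t‖^2 ∂haarAddCircle := by
      apply MeasureTheory.integral_congr_ae
      filter_upwards [ContinuousMap.coeFn_toLp (p := 2) haarAddCircle (𝕜 := ℂ) G] with t ht
      rw [ht]
    rw [h3]
    have h4 := AddCircle.intervalIntegral_preimage (2*π) 0 (fun t => ‖G t‖^2)
    rw [zero_add] at h4
    have h5 : ∫ t : AddCircle (2*π), ‖G t‖^2 ∂(volume)
        = (2*π) * ∫ t : AddCircle (2*π), ‖G t‖^2 ∂haarAddCircle := by
      rw [volume_eq_smul_haarAddCircle, MeasureTheory.integral_smul_measure, ENNReal.toReal_ofReal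
        (by positivity : (0:ℝ) ≤ 2*π), smul_eq_mul]
    have h6 : ∀ x : ℝ, ‖G (x : AddCircle (2*π))‖^2 = g x ^ 2 := by
      intro x
      simp only [hG, ContinuousMap.coe_mk, Periodic.lift_coe, Complex.norm_real,
        _root_.sq_abs, Real.norm_eq_abs]
      show ‖((g x : ℝ) : ℂ)‖^2 = g x ^ 2
      rw [Complex.norm_real, Real.norm_eq_abs, _root_.sq_abs]
    have h7 := h4.trans h5
    simp only [h6] at h7
    rw [h7]
    have hπ : (2*π) ≠ 0 := by positivity
    field_simp
  exact (Summable.hasSum_iff summ).mpr tsum_eq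

lemma myfc_deriv (g g' : ℝ → ℝ) (hg : ∀ x, HasDerivAt g (g' x) x) (hg' : Continuous g')
    (hper : Function.Periodic g (2*π)) (n : ℤ) :
    myfc g' n = Complex.I * n * myfc g n := by
  set u : ℝ → ℂ := fun x => fourier (T := 2*π) (-n) (x : AddCircle (2*π)) with hu
  have hucont : Continuous u :=
    (map_continuous (fourier (T := 2*π) (-n))).comp (AddCircle.continuous_mk' _)
  have huderiv : ∀ x : ℝ, HasDerivAt u (-Complex.I * n * u x) x := by
    intro x
    have h := hasDerivAt_fourier_neg (2*π) n x
    convert h using 2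
    have hπ : (π : ℂ) ≠ 0 := Complex.ofReal_ne_zero.mpr Real.pi_ne_zero
    field_simp
    push_cast; ring
  have hvderiv : ∀ x : ℝ, HasDerivAt (fun y => ((g y : ℝ) : ℂ)) ((g' x : ℝ) : ℂ) x :=
    fun x => (hg x).ofReal_comp
  have hibp := intervalIntegral.integral_mul_deriv_eq_deriv_mul
    (a := 0) (b := 2*π) (u := u) (u' := fun x => -Complex.I * n * u x)
    (v := fun y => ((g y : ℝ) : ℂ)) (v' := fun x => ((g' x : ℝ) : ℂ))
    (fun x _ => huderiv x) (fun x _ => hvderiv x)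
    (((continuous_const.mul hucont).intervalIntegrable _ _))
    ((Complex.continuous_ofReal.comp hg').intervalIntegrable _ _)
  have hub : u (2*π) = u 0 := by
    have : ((2*π : ℝ) : AddCircle (2*π)) = ((0:ℝ) : AddCircle (2*π)) := by
      simpa using AddCircle.coe_add_period (2*π) 0
    simp only [hu, this]
  have hgb : g (2*π) = g 0 := by simpa using hper 0
  simp only [hub] at hibp
  rw [show ((g (2*π) : ℝ) : ℂ) = ((g 0 : ℝ) : ℂ) by rw [hgb]] at hibp
  have : ∫ x in (0:ℝ)..(2*π), u x * ((g' x : ℝ) : ℂ)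
      = Complex.I * n * ∫ x in (0:ℝ)..(2*π), u x * ((g x : ℝ) : ℂ) := by
    rw [hibp, ← intervalIntegral.integral_const_mul]
    have : ∀ x, -Complex.I * ↑n * u x * ↑(g x) = -(Complex.I * ↑n * (u x * ↑(g x))) := by
      intro x; ring
    simp only [this, intervalIntegral.integral_neg]
    ring
  show (1 / (2*π) : ℂ) • ∫ x in (0:ℝ)..(2*π), u x * ((g' x : ℝ) : ℂ)
    = Complex.I * n * ((1 / (2*π) : ℂ) • ∫ x in (0:ℝ)..(2*π), u x * ((g x : ℝ) : ℂ))
  rw [this, smul_eq_mul, smul_eq_mul]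
  ring

lemma fourier_neg_eq (m : ℤ) (x : ℝ) :
    fourier (T := 2*π) (-m) (x : AddCircle (2*π))
      = ((Real.cos (m * x) : ℝ) : ℂ) - ((Real.sin (m * x) : ℝ) : ℂ) * Complex.I := by
  rw [fourier_coe_apply]
  have hπ : (π : ℂ) ≠ 0 := Complex.ofReal_ne_zero.mpr Real.pi_ne_zero
  have : 2 * (π:ℂ) * Complex.I * ((-m : ℤ) : ℂ) * (x:ℝ) / ((2*π : ℝ):ℂ)
      = ((-(m * x) : ℝ) : ℂ) * Complex.I := by
    push_cast
    field_simp
  rw [this, Complex.exp_mul_I, ← Complex.ofReal_cos, ← Complex.ofReal_sin,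
    Real.cos_neg, Real.sin_neg]
  push_cast
  ring

lemma myfc_eq_cos_sin (g : ℝ → ℝ) (hg : Continuous g) (m : ℤ) :
    myfc g m = (1/(2*π) : ℂ) * (((∫ x in (0:ℝ)..(2*π), g x * Real.cos (m * x)) : ℝ)
      - ((∫ x in (0:ℝ)..(2*π), g x * Real.sin (m * x)) : ℝ) * Complex.I) := by
  have key : ∀ x : ℝ, (fourier (T := 2*π) (-m) (x : AddCircle (2*π))) * (g x : ℂ)
      = ((g x * Real.cos (m * x) : ℝ) : ℂ) - ((g x * Real.sin (m * x) : ℝ) : ℂ) * Complex.I := by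
    intro x
    rw [fourier_neg_eq]
    push_cast
    ring
  simp only [myfc, key]
  have h1 : IntervalIntegrable (fun x => ((g x * Real.cos (m*x) : ℝ) : ℂ)) volume 0 (2*π) :=
    Continuous.intervalIntegrable (by continuity) _ _
  have h2 : IntervalIntegrable (fun x => ((g x * Real.sin (m*x) : ℝ) : ℂ) * Complex.I) volume 0 (2*π) :=
    Continuous.intervalIntegrable (by continuity) _ _
  rw [intervalIntegral.integral_sub h1 h2,
    intervalIntegral.integral_mul_const, intervalIntegral.integral_ofReal,
    intervalIntegral.integral_ofReal, smul_eq_mul]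

lemma shift_integral (q : ℝ → ℝ) (hper : Function.Periodic q (2*π)) :
    ∫ x in (0:ℝ)..(2*π), q (x + π) = ∫ x in (0:ℝ)..(2*π), q x := by
  rw [intervalIntegral.integral_comp_add_right]
  have h := hper.intervalIntegral_add_eq π 0
  rw [zero_add] at h
  rw [zero_add, show (2*π + π) = π + 2*π by ring, h]

lemma width_int (p : ℝ → ℝ) (hc : Continuous p) (hper : Function.Periodic p (2*π))
    (hw : ∀ x, p x + p (x + π) = p 0 + p π)
    (t : ℝ → ℝ) (hct : Continuous t) (htper : Function.Periodic t (2*π))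
    (hts : ∀ x, t (x + π) = t x) (hintt : ∫ x in (0:ℝ)..(2*π), t x = 0) :
    ∫ x in (0:ℝ)..(2*π), p x * t x = 0 := by
  have hqper : Function.Periodic (fun x => p x * t x) (2*π) := fun x => by
    show p (x + 2*π) * t (x + 2*π) = p x * t x
    rw [hper x, htper x]
  have hshift : ∫ x in (0:ℝ)..(2*π), p (x + π) * t x = ∫ x in (0:ℝ)..(2*π), p x * t x := by
    have : ∀ x : ℝ, p (x + π) * t x = p (x + π) * t (x + π) := fun x => by rw [hts x]
    simp only [this]
    exact shift_integral (fun x => p x * t x) hqper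
  have hadd : ∫ x in (0:ℝ)..(2*π), (p x * t x + p (x + π) * t x) = 0 := by
    have : ∀ x : ℝ, p x * t x + p (x + π) * t x = (p 0 + p π) * t x := fun x => by
      rw [← add_mul, hw x]
    simp only [this]
    rw [intervalIntegral.integral_const_mul, hintt, mul_zero]
  have i1 : IntervalIntegrable (fun x => p x * t x) volume 0 (2*π) :=
    (hc.mul hct).intervalIntegrable _ _
  have i2 : IntervalIntegrable (fun x => p (x + π) * t x) volume 0 (2*π) :=
    ((hc.comp (continuous_id.add continuous_const)).mul hct).intervalIntegrable _ _
  rw [intervalIntegral.integral_add i1 i2, hshift] at hadd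
  linarith

lemma int_cos2 : ∫ x in (0:ℝ)..(2*π), Real.cos (2*x) = 0 := by
  have h := intervalIntegral.integral_comp_mul_left (a := 0) (b := 2*π) (c := 2) Real.cos (by norm_num)
  simp only [mul_zero] at h
  rw [h, _root_.integral_cos]
  have : Real.sin (2*(2*π)) = 0 := by
    have h4 := Real.sin_nat_mul_pi 4
    push_cast at h4
    rw [show 2*(2*π) = 4*π by ring]
    exact h4
  rw [this]
  simp

lemma int_sin2 : ∫ x in (0:ℝ)..(2*π), Real.sin (2*x) = 0 := by
  have h := intervalIntegral.integral_comp_mul_left (a := 0) (b := 2*π) (c := 2) Real.sin (by norm_num)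
  simp only [mul_zero] at h
  rw [h, _root_.integral_sin]
  have : Real.cos (2*(2*π)) = 1 := by
    have h4 := Real.cos_nat_mul_two_pi 2
    push_cast at h4
    exact h4
  rw [this]
  simp

end ProofAux

set_option maxHeartbeats 3000000 in
theorem stmt_10 (p : ℝ → ℝ) (hp : ContDiff ℝ 2 p)
    (hper : ∀ x, p (x + 2 * π) = p x)
    (hconv : ∀ x, 0 < p x + deriv (deriv p) x)
    (hwidth : ∀ x y, p x + p (x + π) = p y + p (y + π))
    (a b : ℕ → ℝ)
    (ha : ∀ n, a n = (1 / π) * ∫ x in (0:ℝ)..(2 * π), p x * Real.cos (n * x))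
    (hb : ∀ n, b n = (1 / π) * ∫ x in (0:ℝ)..(2 * π), p x * Real.sin (n * x))
    (L F Fe : ℝ)
    (hL : L = ∫ x in (0:ℝ)..(2 * π), p x)
    (hF : F = (1 / 2) * ∫ x in (0:ℝ)..(2 * π), (p x) ^ 2 - (deriv p x) ^ 2)
    (hFe : Fe = (1 / 2) * ∫ x in (0:ℝ)..(2 * π),
      (deriv (deriv p) x) ^ 2 - (deriv p x) ^ 2) :
    L ^ 2 - 4 * π * F = (4 / 9) * π * Fe ↔ ∀ n, 4 ≤ n → a n = 0 ∧ b n = 0 := by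
  have hπ : (0:ℝ) < π := Real.pi_pos
  -- differentiability and periodicity facts
  have h2 : ContDiff ℝ (1+1) p := by
    rwa [show ((1:WithTop ℕ∞)+1) = 2 by rfl]
  have hreg := contDiff_succ_iff_deriv.mp h2
  have hreg' := contDiff_one_iff_deriv.mp hreg.2.2
  have hd1 : Differentiable ℝ p := hreg.1
  have hd2 : Differentiable ℝ (deriv p) := hreg'.1
  have hc0 : Continuous p := hp.continuous
  have hc1 : Continuous (deriv p) := hreg.2.2.continuous
  have hc2 : Continuous (deriv (deriv p)) := hreg'.2
  have hperp : Function.Periodic p (2*π) := hper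
  have hfun : (fun y => p (y + 2*π)) = p := funext hper
  have hper1 : Function.Periodic (deriv p) (2*π) := by
    intro x
    calc deriv p (x + 2*π) = deriv (fun y => p (y + 2*π)) x :=
          (deriv_comp_add_const p (2*π) x).symm
      _ = deriv p x := by rw [hfun]
  have hfun1 : (fun y => deriv p (y + 2*π)) = deriv p := funext hper1
  have hper2 : Function.Periodic (deriv (deriv p)) (2*π) := by
    intro x
    calc deriv (deriv p) (x + 2*π) = deriv (fun y => deriv p (y + 2*π)) x :=
          (deriv_comp_add_const (deriv p) (2*π) x).symm
      _ = deriv (deriv p) x := by rw [hfun1]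
  -- Fourier coefficients
  have hder1 : ∀ n : ℤ, myfc (deriv p) n = Complex.I * n * myfc p n :=
    myfc_deriv p (deriv p) (fun x => (hd1 x).hasDerivAt) hc1 hperp
  have hder2 : ∀ n : ℤ, myfc (deriv (deriv p)) n = Complex.I * n * (Complex.I * n * myfc p n) :=
    fun n => by rw [myfc_deriv (deriv p) (deriv (deriv p))
      (fun x => (hd2 x).hasDerivAt) hc2 hper1 n, hder1 n]
  set r : ℤ → ℝ := fun n => ‖myfc p n‖^2 with hr
  have hrnn : ∀ n, 0 ≤ r n := fun n => by positivity
  -- Parseval sums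
  have S1 : HasSum r ((1/(2*π)) * ∫ x in (0:ℝ)..(2*π), (p x)^2) :=
    myfc_parseval p hc0 hperp
  have normIn : ∀ n : ℤ, ‖Complex.I * (n:ℂ)‖ = |(n:ℝ)| := by
    intro n
    rw [norm_mul, Complex.norm_I, one_mul]
    simp [Complex.norm_intCast]
  have normInsq : ∀ (n : ℤ) (z : ℂ), ‖Complex.I * (n:ℂ) * z‖^2 = (n:ℝ)^2 * ‖z‖^2 := by
    intro n z
    rw [norm_mul, mul_pow, normIn n, _root_.sq_abs]
  have S2 : HasSum (fun n : ℤ => (n:ℝ)^2 * r n)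
      ((1/(2*π)) * ∫ x in (0:ℝ)..(2*π), (deriv p x)^2) := by
    have h := myfc_parseval (deriv p) hc1 hper1
    have he : ∀ n : ℤ, ‖myfc (deriv p) n‖^2 = (n:ℝ)^2 * r n := by
      intro n
      rw [hder1 n, normInsq]
    simpa only [he] using h
  have S3 : HasSum (fun n : ℤ => (n:ℝ)^4 * r n)
      ((1/(2*π)) * ∫ x in (0:ℝ)..(2*π), (deriv (deriv p) x)^2) := by
    have h := myfc_parseval (deriv (deriv p)) hc2 hper2
    have he : ∀ n : ℤ, ‖myfc (deriv (deriv p)) n‖^2 = (n:ℝ)^4 * r n := by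
      intro n
      rw [hder2 n, normInsq, normInsq]
      show (n:ℝ)^2 * ((n:ℝ)^2 * ‖myfc p n‖^2) = (n:ℝ)^4 * ‖myfc p n‖^2
      ring
    simpa only [he] using h
  -- value of c 0
  have hc0v : myfc p 0 = ((L/(2*π) : ℝ) : ℂ) := by
    have h := myfc_eq_cos_sin p hc0 0
    simp only [Int.cast_zero, zero_mul, Real.cos_zero, Real.sin_zero, mul_one, mul_zero,
      intervalIntegral.integral_zero, Complex.ofReal_zero, zero_mul, sub_zero] at h
    rw [h, ← hL]
    push_cast
    field_simp
  have hr0 : r 0 = (L/(2*π))^2 := by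
    rw [hr]
    simp only [hc0v, Complex.norm_real, Real.norm_eq_abs, _root_.sq_abs]
  -- key coefficient relations
  have key : ∀ n : ℕ, myfc p (n:ℤ) = ((a n : ℂ) - (b n : ℂ)*Complex.I)/2
      ∧ myfc p (-(n:ℤ)) = ((a n : ℂ) + (b n : ℂ)*Complex.I)/2 := by
    intro n
    have ea : (∫ x in (0:ℝ)..(2*π), p x * Real.cos (n * x)) = π * a n := by
      rw [ha n]; field_simp
    have eb : (∫ x in (0:ℝ)..(2*π), p x * Real.sin (n * x)) = π * b n := by
      rw [hb n]; field_simp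
    constructor
    · have h := myfc_eq_cos_sin p hc0 (n:ℤ)
      rw [show (((n:ℤ):ℝ)) = (n:ℝ) by push_cast; ring] at h
      rw [h, ea, eb]
      have hπc : (π:ℂ) ≠ 0 := Complex.ofReal_ne_zero.mpr Real.pi_ne_zero
      push_cast
      field_simp
    · have h := myfc_eq_cos_sin p hc0 (-(n:ℤ))
      rw [show ((((-(n:ℤ)):ℤ):ℝ)) = -(n:ℝ) by push_cast; ring] at h
      simp only [neg_mul, Real.cos_neg, Real.sin_neg, mul_neg,
        intervalIntegral.integral_neg] at h
      rw [h, ea, eb]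
      have hπc : (π:ℂ) ≠ 0 := Complex.ofReal_ne_zero.mpr Real.pi_ne_zero
      push_cast
      field_simp
      ring
  -- width condition kills n = 2
  have hw : ∀ x, p x + p (x + π) = p 0 + p π := by
    intro x
    have := hwidth x 0
    rwa [zero_add] at this
  have ha2 : a 2 = 0 := by
    rw [ha 2]
    have : (∫ x in (0:ℝ)..(2*π), p x * Real.cos ((2:ℕ) * x)) = 0 := by
      apply width_int p hc0 hperp hw
      · continuity
      · intro x
        push_cast
        rw [show (2:ℝ)*(x + 2*π) = 2*x + 2*(2*π) by ring]
        have := Real.cos_add_int_mul_two_pi (2*x) 2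
        push_cast at this
        rw [← this]
      · intro x
        push_cast
        rw [show (2:ℝ)*(x + π) = 2*x + 2*π by ring, Real.cos_add_two_pi]
      · push_cast
        exact int_cos2
    rw [this, mul_zero]
  have hb2 : b 2 = 0 := by
    rw [hb 2]
    have : (∫ x in (0:ℝ)..(2*π), p x * Real.sin ((2:ℕ) * x)) = 0 := by
      apply width_int p hc0 hperp hw
      · continuity
      · intro x
        push_cast
        rw [show (2:ℝ)*(x + 2*π) = 2*x + 2*(2*π) by ring]
        have := Real.sin_add_int_mul_two_pi (2*x) 2
        push_cast at this
        rw [← this]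
      · intro x
        push_cast
        rw [show (2:ℝ)*(x + π) = 2*x + 2*π by ring, Real.sin_add_two_pi]
      · push_cast
        exact int_sin2
    rw [this, mul_zero]
  have hr2 : r 2 = 0 := by
    have h := (key 2).1
    rw [ha2, hb2] at h
    simp only [Complex.ofReal_zero, zero_mul, zero_sub, neg_zero, zero_div] at h
    rw [hr]
    norm_num at h ⊢
    rw [show ((2:ℤ)) = ((2:ℕ):ℤ) by norm_num]
    simp [h]
  have hrm2 : r (-2) = 0 := by
    have h := (key 2).2
    rw [ha2, hb2] at h
    simp only [Complex.ofReal_zero, zero_mul, zero_add, zero_div] at h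
    push_cast at h
    simp [hr, h]
  -- combined sum
  have hδ : HasSum (fun n : ℤ => if n = 0 then r 0 else 0) (r 0) := hasSum_ite_eq 0 (r 0)
  set IA := ∫ x in (0:ℝ)..(2*π), (p x)^2 with hIA
  set IB := ∫ x in (0:ℝ)..(2*π), (deriv p x)^2 with hIB
  set IC := ∫ x in (0:ℝ)..(2*π), (deriv (deriv p) x)^2 with hIC
  set t : ℤ → ℝ := fun n =>
    10*((n:ℝ)^2 * r n) - (n:ℝ)^4 * r n - 9*(r n - (if n = 0 then r 0 else 0)) with ht
  set S₀ : ℝ := 10*((1/(2*π)) * IB) - (1/(2*π)) * IC - 9*((1/(2*π)) * IA - r 0) with hS₀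
  have St : HasSum t S₀ := ((S2.mul_left 10).sub S3).sub ((S1.sub hδ).mul_left 9)
  -- t formula for n ≠ 0
  have tformula : ∀ n : ℤ, n ≠ 0 → t n = (10*(n:ℝ)^2 - (n:ℝ)^4 - 9) * r n := by
    intro n hn
    rw [ht]
    simp only [if_neg hn]
    ring
  have t0 : t 0 = 0 := by
    rw [ht]; simp
  -- energy identity
  have hFval : F = (1/2) * (IA - IB) := by
    rw [hF, intervalIntegral.integral_sub (f := fun x => p x ^ 2) (g := fun x => deriv p x ^ 2)
      (((hc0.pow 2)).intervalIntegrable _ _) (((hc1.pow 2)).intervalIntegrable _ _)]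
  have hFeval : Fe = (1/2) * (IC - IB) := by
    rw [hFe, intervalIntegral.integral_sub (f := fun x => deriv (deriv p) x ^ 2) (g := fun x => deriv p x ^ 2)
      (((hc2.pow 2)).intervalIntegrable _ _) (((hc1.pow 2)).intervalIntegrable _ _)]
  have hE : L^2 - 4*π*F - (4/9)*π*Fe = (4*π^2/9) * S₀ := by
    rw [hFval, hFeval, hS₀, hr0]
    field_simp
    ring
  have hfactor : (0:ℝ) < 4*π^2/9 := by positivity
  have hiff : (L ^ 2 - 4 * π * F = (4 / 9) * π * Fe) ↔ S₀ = 0 := by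
    constructor
    · intro h
      have : (4*π^2/9) * S₀ = 0 := by rw [← hE]; linarith
      exact (mul_eq_zero.mp this).resolve_left (by positivity)
    · intro h
      have := hE
      rw [h, mul_zero] at this
      linarith
  rw [hiff]
  constructor
  · -- S₀ = 0 → coefficients vanish
    intro hS0
    have ht_nonpos : ∀ n : ℤ, t n ≤ 0 := by
      intro n
      by_cases hn : n = 0
      · rw [hn, t0]
      rw [tformula n hn]
      by_cases h4 : 4 ≤ |n|
      · have h16 : (16:ℝ) ≤ (n:ℝ)^2 := by
          have : (4:ℝ) ≤ |(n:ℝ)| := by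
            rw [← Int.cast_abs]
            exact_mod_cast h4
          nlinarith [abs_nonneg (n:ℝ), _root_.sq_abs (n:ℝ)]
        have : 10*(n:ℝ)^2 - (n:ℝ)^4 - 9 ≤ 0 := by nlinarith
        exact mul_nonpos_of_nonpos_of_nonneg this (hrnn n)
      · push_neg at h4
        have hb1 : -3 ≤ n := by
          rcases abs_lt.mp (by omega : |n| < 4) with ⟨h, _⟩; omega
        have hb2 : n ≤ 3 := by
          rcases abs_lt.mp (by omega : |n| < 4) with ⟨_, h⟩; omega
        interval_cases n
        · norm_num
        · rw [hrm2]; norm_num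
        · norm_num
        · omega
        · norm_num
        · rw [hr2]; norm_num
        · norm_num
    have ht0 : ∀ n : ℤ, t n = 0 := by
      intro n
      refine le_antisymm (ht_nonpos n) ?_
      have hneg : HasSum (fun n => -(t n)) 0 := by
        have := St.neg
        rwa [hS0, neg_zero] at this
      have := le_hasSum hneg n (fun j _ => neg_nonneg.mpr (ht_nonpos j))
      linarith
    intro n hn
    have hcoef : ∀ m : ℤ, m ≠ 0 → (10*(m:ℝ)^2 - (m:ℝ)^4 - 9) ≠ 0 → r m = 0 := by
      intro m hm hcm
      have := ht0 m
      rw [tformula m hm] at this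
      exact (mul_eq_zero.mp this).resolve_left hcm
    have hn0 : ((n:ℤ)) ≠ 0 := by
      simp only [ne_eq, Int.natCast_eq_zero]
      omega
    have hncast : (4:ℝ) ≤ ((n:ℤ):ℝ) := by push_cast; exact_mod_cast hn
    have hcm : (10*((n:ℤ):ℝ)^2 - ((n:ℤ):ℝ)^4 - 9) ≠ 0 := by
      have h16 : (16:ℝ) ≤ ((n:ℤ):ℝ)^2 := by nlinarith [hncast]
      have hsq : (16:ℝ) * ((n:ℤ):ℝ)^2 ≤ ((n:ℤ):ℝ)^4 := by nlinarith [h16]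
      have hlt : 10*((n:ℤ):ℝ)^2 - ((n:ℤ):ℝ)^4 - 9 < 0 := by nlinarith [h16, hsq]
      exact ne_of_lt hlt
    have hra : r (n:ℤ) = 0 := hcoef (n:ℤ) hn0 hcm
    have hrb : r (-(n:ℤ)) = 0 := by
      apply hcoef (-(n:ℤ)) (by omega)
      have e : ((-(n:ℤ) : ℤ):ℝ) = -((n:ℤ):ℝ) := by push_cast; ring
      rw [e, show (10*(-((n:ℤ):ℝ))^2 - (-((n:ℤ):ℝ))^4 - 9)
        = (10*((n:ℤ):ℝ)^2 - ((n:ℤ):ℝ)^4 - 9) from by ring]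
      exact hcm
    have hca : myfc p ((n:ℤ)) = 0 := by
      have h1 : ‖myfc p (n:ℤ)‖^2 = 0 := by simpa [hr] using hra
      exact norm_eq_zero.mp (pow_eq_zero_iff (by norm_num : (2:ℕ) ≠ 0) |>.mp h1)
    have hcb : myfc p (-(n:ℤ)) = 0 := by
      have h1 : ‖myfc p (-(n:ℤ))‖^2 = 0 := by simpa [hr] using hrb
      exact norm_eq_zero.mp (pow_eq_zero_iff (by norm_num : (2:ℕ) ≠ 0) |>.mp h1)
    have h1 := (key n).1
    have h2 := (key n).2
    rw [hca] at h1
    rw [hcb] at h2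
    have e1 : ((a n : ℂ) - (b n : ℂ) * Complex.I) = 0 := by
      linear_combination (2:ℂ) * h1.symm
    have e2 : ((a n : ℂ) + (b n : ℂ) * Complex.I) = 0 := by
      linear_combination (2:ℂ) * h2.symm
    constructor
    · have : ((a n : ℝ) : ℂ) = 0 := by
        linear_combination (1/2 : ℂ) * e1 + (1/2 : ℂ) * e2
      exact_mod_cast this
    · have e3 : ((b n : ℂ)) * Complex.I = 0 := by
        linear_combination (1/2:ℂ) * e2 - (1/2:ℂ) * e1
      have : ((b n : ℝ) : ℂ) = 0 :=
        (mul_eq_zero.mp e3).resolve_right Complex.I_ne_zero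
      exact_mod_cast this
  · -- reverse direction
    intro hz
    have hrzero : ∀ m : ℕ, 4 ≤ m → r (m:ℤ) = 0 ∧ r (-(m:ℤ)) = 0 := by
      intro m hm
      obtain ⟨hA, hB⟩ := hz m hm
      have h1 := (key m).1
      have h2 := (key m).2
      rw [hA, hB] at h1 h2
      simp only [Complex.ofReal_zero, zero_mul, zero_sub, zero_add, neg_zero, zero_div] at h1 h2
      constructor
      · simp [hr, h1]
      · simp [hr, h2]
    have ht0 : ∀ n : ℤ, t n = 0 := by
      intro n
      by_cases hn : n = 0
      · rw [hn, t0]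
      rw [tformula n hn]
      by_cases h4 : 4 ≤ |n|
      · obtain ⟨m, rfl | rfl⟩ := Int.eq_nat_or_neg n
        · have hm : 4 ≤ m := by
            rwa [abs_of_nonneg (Int.natCast_nonneg m), show ((4:ℤ)) = ((4:ℕ):ℤ) by norm_num,
              Nat.cast_le] at h4
          rw [(hrzero m hm).1, mul_zero]
        · have hm : 4 ≤ m := by
            rw [abs_neg, abs_of_nonneg (Int.natCast_nonneg m)] at h4
            exact_mod_cast h4
          rw [(hrzero m hm).2, mul_zero]
      · push_neg at h4
        have hb1 : -3 ≤ n := by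
          rcases abs_lt.mp (by omega : |n| < 4) with ⟨h, _⟩; omega
        have hb2 : n ≤ 3 := by
          rcases abs_lt.mp (by omega : |n| < 4) with ⟨_, h⟩; omega
        interval_cases n
        · norm_num
        · simp [hrm2]
        · norm_num
        · omega
        · norm_num
        · simp [hr2]
        · norm_num
    have hsum0 : HasSum t 0 := by
      have he : t = fun _ => (0:ℝ) := funext ht0
      rw [he]
      exact hasSum_zero
    exact St.unique hsum0
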